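/- Suppose n > m + 2γ for some positive integer m, γ ∈ (0,1), and W : ℝ₊^{n+1} → ℝ satisfies the decay |∇W(x)| ≤ C |x|^{−(n−2γ+1)} for |x| ≥ 1 together with |∇W| bounded on bounded sets. Then for the rescaled family W_ε(x) = ε^{−(n−2γ)/2} W(x/ε) and any fixed η > 0, one has ∫_{B⁺(0,η)} x_{n+1}^{1−2γ} |x|^{m+1} |∇W_ε(x)|² dx = o(ε^m) as ε → 0⁺. -/

import Mathlib

open MeasureTheory Set Filter Asymptotics

lemma aux_abs_rpow_integrable {η c : ℝ} (hη : 0 < η) (hc : -1 < c) :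
    MeasureTheory.Integrable ((Set.Ioo (-η) η).indicator fun t : ℝ => |t| ^ c) := by
  rw [integrable_indicator_iff measurableSet_Ioo]
  have hpos : IntegrableOn (fun t : ℝ => |t| ^ c) (Ioo 0 η) := by
    refine ((intervalIntegral.integrableOn_Ioo_rpow_iff hη).2 hc).congr_fun
      (fun t ht => ?_) measurableSet_Ioo
    rw [abs_of_pos ht.1]
  have hneg : IntegrableOn (fun t : ℝ => |t| ^ c) (Ioo (-η) 0) := by
    have h := (Measure.measurePreserving_neg (volume : Measure ℝ)).integrableOn_comp_preimage
      (Homeomorph.neg ℝ).measurableEmbedding (f := fun t : ℝ => |t| ^ c) (s := Ioo 0 η)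
    have h2 : IntegrableOn ((fun t : ℝ => |t| ^ c) ∘ (Neg.neg : ℝ → ℝ))
        ((Neg.neg : ℝ → ℝ) ⁻¹' (Ioo 0 η)) := h.2 hpos
    have hset : ((Neg.neg : ℝ → ℝ) ⁻¹' (Ioo 0 η)) = Ioo (-η) 0 := by
      ext t; simp only [mem_preimage, mem_Ioo]; constructor <;> intro ht <;>
        exact ⟨by linarith [ht.1, ht.2], by linarith [ht.1, ht.2]⟩
    rw [hset] at h2
    refine h2.congr_fun (fun t ht => ?_) measurableSet_Ioo
    simp [Function.comp, abs_neg]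
  have h0 : IntegrableOn (fun t : ℝ => |t| ^ c) ({0} : Set ℝ) := by
    unfold IntegrableOn
    rw [Measure.restrict_eq_zero.2 (by simp)]
    exact integrable_zero_measure
  refine ((hneg.union h0).union hpos).mono_set fun t ht => ?_
  rcases lt_trichotomy t 0 with h | h | h
  · exact Or.inl (Or.inl ⟨ht.1, h⟩)
  · exact Or.inl (Or.inr (by simp [h]))
  · exact Or.inr ⟨h, ht.2⟩

lemma aux_amgm {ι : Type*} [Fintype ι] (θ : ι → ℝ) (hθ0 : ∀ i, 0 ≤ θ i) (hθ1 : ∀ i, θ i ≤ 1)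
    (hsum : ∑ i, θ i = 1) (x : ι → ℝ) (hx : ∀ i, x i ≠ 0) (q : ℝ) (hq : q ≤ 0) :
    (∑ i, (x i)^2) ^ (q/2) ≤ ∏ i, |x i| ^ (θ i * q) := by
  have hprodpos : 0 < ∏ i, ((x i)^2) ^ θ i :=
    Finset.prod_pos fun i _ => Real.rpow_pos_of_pos (by simpa using sq_pos_of_ne_zero (hx i)) _
  have h1 : ∏ i, ((x i)^2) ^ θ i ≤ ∑ i, (x i)^2 :=
    (Real.geom_mean_le_arith_mean_weighted Finset.univ θ (fun i => (x i)^2)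
      (fun i _ => hθ0 i) hsum (fun i _ => sq_nonneg _)).trans
      (Finset.sum_le_sum fun i _ => mul_le_of_le_one_left (sq_nonneg _) (hθ1 i))
  have h2 : (∑ i, (x i)^2) ^ (q/2) ≤ (∏ i, ((x i)^2) ^ θ i) ^ (q/2) :=
    Real.rpow_le_rpow_of_nonpos hprodpos h1 (by linarith)
  refine h2.trans_eq ?_
  rw [← Real.finset_prod_rpow Finset.univ _ (fun i _ => Real.rpow_nonneg (sq_nonneg _) _)]
  refine Finset.prod_congr rfl fun i _ => ?_
  rw [← Real.rpow_mul (sq_nonneg (x i)), ← sq_abs (x i),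
    ← Real.rpow_natCast |x i| 2, ← Real.rpow_mul (abs_nonneg _)]
  congr 1
  push_cast
  ring

set_option maxHeartbeats 2000000 in
/-- If `|∇W(x)| ≤ C|x|^{−(n−2γ+1)}` for `|x| ≥ 1` and `∇W` is bounded on bounded sets,
then `∫_{B⁺(0,η)} x_{n+1}^{1−2γ} |x|^{m+1} |∇W_ε|² dx = o(ε^m)` as `ε → 0⁺`,
where `W_ε(x) = ε^{−(n−2γ)/2} W(x/ε)`. -/
theorem stmt_19 (n m : ℕ) (hm : 1 ≤ m) (γ : ℝ) (hγ : γ ∈ Set.Ioo (0:ℝ) 1)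
    (hn : (m:ℝ) + 2*γ < (n:ℝ)) (η : ℝ) (hη : 0 < η)
    (W : EuclideanSpace ℝ (Fin (n+1)) → ℝ) (C : ℝ)
    (hdecay : ∀ x : EuclideanSpace ℝ (Fin (n+1)), 1 ≤ ‖x‖ →
      ‖fderiv ℝ W x‖ ≤ C * ‖x‖ ^ (-((n:ℝ) - 2*γ + 1)))
    (hbdd : ∀ R : ℝ, ∃ C' : ℝ, ∀ x : EuclideanSpace ℝ (Fin (n+1)), ‖x‖ ≤ R →
      ‖fderiv ℝ W x‖ ≤ C') :
    (fun ε : ℝ =>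
        ∫ x in {x : EuclideanSpace ℝ (Fin (n+1)) | 0 < x (Fin.last n)} ∩ Metric.ball 0 η,
          (x (Fin.last n)) ^ (1 - 2*γ) * ‖x‖ ^ ((m:ℝ) + 1) *
            (ε ^ (-(((n:ℝ) - 2*γ)/2) - 1) * ‖fderiv ℝ W (ε⁻¹ • x)‖)^2)
      =o[nhdsWithin 0 (Set.Ioi 0)] fun ε : ℝ => ε ^ m := by
  obtain ⟨hγ0, hγ1⟩ := hγ
  have hm1 : (1:ℝ) ≤ (m:ℝ) := by exact_mod_cast hm
  have hn2 : (2:ℝ) ≤ (n:ℝ) := by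
    have h1 : (1:ℝ) < (n:ℝ) := by linarith
    have h2 : 1 < n := by exact_mod_cast h1
    exact_mod_cast h2
  set l : Fin (n+1) := Fin.last n with hl
  set P : ℝ := (n:ℝ) - 2*γ with hPdef
  have hPm : (m:ℝ) < P := by simp only [hPdef]; linarith
  set δ : ℝ := min 1 (P - (m:ℝ)) / 2 with hδdef
  have hδ0 : 0 < δ := by
    have : (0:ℝ) < min 1 (P - (m:ℝ)) := lt_min one_pos (by linarith)
    simp only [hδdef]; linarith
  have hδ1 : δ < 1 := by
    have : min 1 (P - (m:ℝ)) ≤ 1 := min_le_left _ _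
    simp only [hδdef]; linarith
  have hδP : (m:ℝ) + δ ≤ P := by
    have : min 1 (P - (m:ℝ)) ≤ P - (m:ℝ)  := min_le_right _ _
    simp only [hδdef]; linarith
  set b : ℝ := ((m:ℝ) + δ + P + 2)/2 with hbdef
  have hb0 : 0 < b := by simp only [hbdef]; have := hm1.trans hPm.le; linarith
  have hbP : b ≤ P + 1 := by simp only [hbdef]; linarith
  set q : ℝ := (m:ℝ) + 1 - 2*b with hqdef
  have hqval : q = -(P + 1 + δ) := by simp only [hqdef, hbdef]; ring
  have hq0 : q ≤ 0 := by rw [hqval]; have := hm1.trans hPm.le; linarith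
  -- constants
  obtain ⟨C₁, hC₁⟩ := hbdd 1
  have hC₁0 : 0 ≤ C₁ := le_trans (norm_nonneg _) (hC₁ 0 (by simp))
  have hC0 : 0 ≤ C := by
    have h := hdecay (EuclideanSpace.single l 1) (by rw [EuclideanSpace.norm_single]; simp)
    rw [EuclideanSpace.norm_single] at h
    simp only [norm_one, Real.one_rpow, mul_one] at h
    exact le_trans (norm_nonneg _) h
  set M : ℝ := max (C^2) (C₁^2) with hMdef
  have hM0 : 0 ≤ M := le_trans (sq_nonneg C) (le_max_left _ _)
  set S : Set (EuclideanSpace ℝ (Fin (n+1))) :=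
    {x : EuclideanSpace ℝ (Fin (n+1)) | 0 < x l} ∩ Metric.ball 0 η with hSdef
  have hcoord : ∀ i : Fin (n+1), Measurable fun x : EuclideanSpace ℝ (Fin (n+1)) => x i :=
    fun i => (measurable_pi_apply i).comp
      (MeasurableEquiv.toLp 2 (Fin (n+1) → ℝ)).symm.measurable
  have hSmeas : MeasurableSet S :=
    (measurableSet_lt measurable_const (hcoord l)).inter measurableSet_ball
  have hcoordle : ∀ (x : EuclideanSpace ℝ (Fin (n+1))) (i : Fin (n+1)), |x i| ≤ ‖x‖ := by
    intro x i
    rw [EuclideanSpace.norm_eq, ← Real.sqrt_sq_eq_abs]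
    refine Real.sqrt_le_sqrt ?_
    refine Finset.single_le_sum (f := fun j => ‖x j‖^2) (fun j _ => by positivity)
      (Finset.mem_univ i) |>.trans_eq' ?_
    rw [Real.norm_eq_abs, sq_abs]
  -- the weight function G
  set A : ℝ := 1 - 2*γ with hAdef
  set G : EuclideanSpace ℝ (Fin (n+1)) → ℝ := fun x => (x l) ^ A * ‖x‖ ^ q with hGdef
  have hGmeas : Measurable G :=
    ((hcoord l).pow_const _).mul (measurable_norm.pow_const _)
  have hGnonneg : ∀ x ∈ S, 0 ≤ G x := fun x hx =>
    mul_nonneg (Real.rpow_nonneg (le_of_lt hx.1) _) (Real.rpow_nonneg (norm_nonneg _) _)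
  have hGint : IntegrableOn G S := by
    classical
    have hn0 : (0:ℝ) < (n:ℝ) := by linarith
    set Qa : ℝ := P + 1 + δ with hQadef
    have hQa0 : 0 < Qa := by simp only [hQadef]; linarith
    set v : ℝ := (max 0 (A + δ) + (A + 1))/2 with hvdef
    have hA1 : 0 < A + 1 := by rw [hAdef]; linarith
    have hv1 : v < A + 1 := by
      have h2 : max 0 (A+δ) < A+1 := max_lt hA1 (by linarith)
      simp only [hvdef]; linarith
    have hv2 : A + δ < v := by
      have h3 := le_max_right 0 (A+δ)
      simp only [hvdef]; linarith
    have hv0 : 0 < v := by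
      have h3 := le_max_left 0 (A+δ)
      simp only [hvdef]; linarith
    have hvQa : v < Qa := by
      have h4 : A + 1 ≤ Qa := by rw [hAdef, hQadef, hPdef]; linarith
      linarith
    have hQan : Qa - v < (n:ℝ) := by
      have h5 : Qa - (n:ℝ) = A + δ := by rw [hAdef, hQadef, hPdef]; ring
      linarith
    set θ : Fin (n+1) → ℝ := fun i => if i = l then v/Qa else (Qa - v)/((n:ℝ)*Qa) with hθdef
    have hθ0 : ∀ i, 0 ≤ θ i := by
      intro i; simp only [hθdef]
      split
      · exact div_nonneg hv0.le hQa0.le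
      · exact div_nonneg (by linarith) (mul_nonneg hn0.le hQa0.le)
    have hθ1 : ∀ i, θ i ≤ 1 := by
      intro i; simp only [hθdef]
      split
      · rw [div_le_one hQa0]; linarith
      · rw [div_le_one (mul_pos hn0 hQa0)]; nlinarith
    have hθsum : ∑ i, θ i = 1 := by
      have hstep : (∑ i : Fin (n+1), θ i)
          = θ l + (↑n) * ((Qa - v)/((n:ℝ)*Qa)) := by
        rw [← Finset.add_sum_erase _ _ (Finset.mem_univ l)]
        congr 1
        rw [Finset.sum_congr rfl (fun i hi => by
          simp only [hθdef]; rw [if_neg (Finset.ne_of_mem_erase hi)]),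
          Finset.sum_const, Finset.card_erase_of_mem (Finset.mem_univ l),
          Finset.card_univ, Fintype.card_fin]
        simp [nsmul_eq_mul]
      rw [hstep]
      simp only [hθdef, if_pos rfl]
      field_simp
      ring
    set cexp : Fin (n+1) → ℝ := fun i => if i = l then A - v else -((Qa - v)/(n:ℝ)) with hcdef
    have hcgt : ∀ i, -1 < cexp i := by
      intro i; simp only [hcdef]
      split
      · linarith
      · have h6 : (Qa - v)/(n:ℝ) < 1 := (div_lt_one hn0).2 hQan
        linarith
    have hθq : ∀ i, i ≠ l → θ i * q = cexp i := by
      intro i hi; simp only [hθdef, hcdef, if_neg hi]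
      rw [hqval]; field_simp
    set ψ : Fin (n+1) → ℝ → ℝ := fun i => (Ioo (-η) η).indicator (fun s => |s| ^ (cexp i))
      with hψdef
    have hψint : ∀ i, Integrable (ψ i) := fun i => aux_abs_rpow_integrable hη (hcgt i)
    have hprodPi : Integrable (fun y : Fin (n+1) → ℝ => ∏ i, ψ i (y i)) :=
      Integrable.fintype_prod (𝕜 := ℝ) hψint
    have hprodE : Integrable (fun x : EuclideanSpace ℝ (Fin (n+1)) => ∏ i, ψ i (x i)) := by
      have h := (EuclideanSpace.volume_preserving_symm_measurableEquiv_toLp (Fin (n+1))).integrable_comp_emb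
        (MeasurableEquiv.measurableEmbedding _)
        (g := fun y : Fin (n+1) → ℝ => ∏ i, ψ i (y i))
      exact h.2 hprodPi
    have hnull : volume (⋃ i, {x : EuclideanSpace ℝ (Fin (n+1)) | x i = 0}) = 0 := by
      refine measure_iUnion_null fun i => ?_
      have hker : {x : EuclideanSpace ℝ (Fin (n+1)) | x i = 0}
          = (LinearMap.ker (EuclideanSpace.projₗ (𝕜 := ℝ) i) : Set (EuclideanSpace ℝ (Fin (n+1)))) := by
        ext y
        simp [LinearMap.mem_ker]
      rw [hker]
      refine Measure.addHaar_submodule _ _ ?_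
      intro htop
      have hmem : EuclideanSpace.single i (1:ℝ) ∈ LinearMap.ker (EuclideanSpace.projₗ (𝕜 := ℝ) i) := by
        rw [htop]; trivial
      rw [LinearMap.mem_ker] at hmem
      simp [EuclideanSpace.single_apply] at hmem
    refine Integrable.mono' hprodE.integrableOn (hGmeas.aestronglyMeasurable.restrict) ?_
    have hae1 : ∀ᵐ x ∂(volume.restrict S), x ∈ S := ae_restrict_mem hSmeas
    have hae2 : ∀ᵐ x ∂(volume.restrict S),
        x ∉ ⋃ i, {x : EuclideanSpace ℝ (Fin (n+1)) | x i = 0} :=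
      ae_restrict_of_ae (measure_eq_zero_iff_ae_notMem.mp hnull)
    filter_upwards [hae1, hae2] with x hxS hxN
    have hx0 : ∀ i, x i ≠ 0 := fun i hi => hxN (mem_iUnion.2 ⟨i, hi⟩)
    have hxl : 0 < x l := hxS.1
    have hrball : ‖x‖ < η := mem_ball_zero_iff.1 hxS.2
    have hr0 : 0 < ‖x‖ := lt_of_lt_of_le hxl (le_trans (le_abs_self _) (hcoordle x l))
    have hxIoo : ∀ i, x i ∈ Ioo (-η) η := fun i =>
      abs_lt.1 (lt_of_le_of_lt (hcoordle x i) hrball)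
    have hψx : ∀ i, ψ i (x i) = |x i| ^ (cexp i) := fun i => by
      simp only [hψdef]
      rw [indicator_of_mem (hxIoo i)]
    rw [Real.norm_eq_abs, abs_of_nonneg (hGnonneg x hxS)]
    have hnq : ‖x‖ ^ q = (∑ i, (x i)^2) ^ (q/2) := by
      rw [EuclideanSpace.norm_eq]
      have hs : (∑ i, ‖x i‖^2) = ∑ i, (x i)^2 := by
        refine Finset.sum_congr rfl fun i _ => by rw [Real.norm_eq_abs, sq_abs]
      rw [hs, Real.sqrt_eq_rpow, ← Real.rpow_mul (Finset.sum_nonneg fun i _ => sq_nonneg _)]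
      congr 1; ring
    have hamgm : ‖x‖ ^ q ≤ ∏ i, |x i| ^ (θ i * q) := by
      rw [hnq]
      exact aux_amgm θ hθ0 hθ1 hθsum (fun i => x i) hx0 q hq0
    have hGle : G x ≤ (x l) ^ A * ∏ i, |x i| ^ (θ i * q) := by
      simp only [hGdef]
      exact mul_le_mul_of_nonneg_left hamgm (Real.rpow_nonneg hxl.le _)
    have hsplit : (x l) ^ A * ∏ i, |x i| ^ (θ i * q) = ∏ i, |x i| ^ (cexp i) := by
      rw [← Finset.mul_prod_erase _ _ (Finset.mem_univ l),
        ← Finset.mul_prod_erase _ (fun i => |x i| ^ (cexp i)) (Finset.mem_univ l),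
        ← mul_assoc]
      congr 1
      · have habs : 0 < |x l| := abs_pos.2 (hx0 l)
        have hθl : θ l * q = -v := by
          simp only [hθdef, if_pos rfl]
          rw [hqval]; field_simp
        rw [hθl, show (x l) ^ A = |x l| ^ A by rw [abs_of_pos hxl],
          ← Real.rpow_add habs]
        simp only [hcdef, if_pos rfl]
        congr 1
      · exact Finset.prod_congr rfl fun i hi => by rw [hθq i (Finset.ne_of_mem_erase hi)]
    calc G x ≤ ∏ i, |x i| ^ (cexp i) := hGle.trans_eq hsplit
      _ = ∏ i, ψ i (x i) := (Finset.prod_congr rfl fun i _ => (hψx i).symm)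
  set I : ℝ := ∫ x in S, G x with hIdef
  -- pointwise bound
  have key : ∀ ε ∈ Ioo (0:ℝ) 1, ∀ x ∈ S,
      (x l) ^ (1 - 2*γ) * ‖x‖ ^ ((m:ℝ) + 1) *
        (ε ^ (-(((n:ℝ) - 2*γ)/2) - 1) * ‖fderiv ℝ W (ε⁻¹ • x)‖)^2
      ≤ (M * ε ^ ((m:ℝ) + δ)) * G x := by
    intro ε hε x hx
    obtain ⟨hε0, hε1⟩ := hε
    have hxl : 0 < x l := hx.1
    have hr0 : 0 < ‖x‖ := lt_of_lt_of_le hxl (le_trans (le_abs_self _) (hcoordle x l))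
    have hxlA : 0 ≤ (x l) ^ (1 - 2*γ) := Real.rpow_nonneg hxl.le _
    have hrq : 0 ≤ ‖x‖ ^ q := Real.rpow_nonneg hr0.le _
    have hnsmul : ‖ε⁻¹ • x‖ = ε⁻¹ * ‖x‖ := by
      rw [norm_smul, Real.norm_eq_abs, abs_of_pos (inv_pos.2 hε0)]
    have hεP : 0 ≤ ε ^ (-P - 2) := Real.rpow_nonneg hε0.le _
    have hεmδ : 0 ≤ ε ^ ((m:ℝ) + δ) := Real.rpow_nonneg hε0.le _
    have hε2 : ε ^ (2*b) * ε ^ (-P-2) = ε ^ ((m:ℝ)+δ) := by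
      rw [← Real.rpow_add hε0]
      congr 1
      rw [hbdef]; ring
    have hsq : (ε ^ (-(((n:ℝ) - 2*γ)/2) - 1) * ‖fderiv ℝ W (ε⁻¹ • x)‖)^2
        = ε ^ (-P - 2) * ‖fderiv ℝ W (ε⁻¹ • x)‖^2 := by
      rw [mul_pow]
      congr 1
      rw [← Real.rpow_natCast (ε ^ (-(((n:ℝ) - 2*γ)/2) - 1)) 2, ← Real.rpow_mul hε0.le,
        hPdef]
      congr 1
      push_cast; ring
    rw [hsq]
    have hGx : G x = (x l) ^ (1 - 2*γ) * ‖x‖ ^ q := by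
      simp only [hGdef, hAdef]
    rw [hGx]
    set w : ℝ := ‖fderiv ℝ W (ε⁻¹ • x)‖ with hwdef
    have hw0 : 0 ≤ w := norm_nonneg _
    rcases le_total ‖x‖ ε with hcase | hcase
    · -- inner region
      have hwle : w ≤ C₁ := by
        refine hC₁ _ ?_
        rw [hnsmul]
        calc ε⁻¹ * ‖x‖ ≤ ε⁻¹ * ε := by
              exact mul_le_mul_of_nonneg_left hcase (inv_pos.2 hε0).le
          _ = 1 := inv_mul_cancel₀ hε0.ne'
      have hrsplit : ‖x‖ ^ ((m:ℝ)+1) ≤ ε ^ (2*b) * ‖x‖ ^ q := by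
        have h1 : ‖x‖ ^ ((m:ℝ)+1) = ‖x‖ ^ (2*b) * ‖x‖ ^ q := by
          rw [← Real.rpow_add hr0, hqdef]; congr 1; ring
        rw [h1]
        exact mul_le_mul_of_nonneg_right
          (Real.rpow_le_rpow hr0.le hcase (by positivity)) hrq
      calc (x l) ^ (1 - 2*γ) * ‖x‖ ^ ((m:ℝ) + 1) * (ε ^ (-P - 2) * w^2)
          ≤ (x l) ^ (1 - 2*γ) * (ε ^ (2*b) * ‖x‖ ^ q) * (ε ^ (-P - 2) * C₁^2) := by
            refine mul_le_mul (mul_le_mul le_rfl hrsplit (Real.rpow_nonneg (norm_nonneg x) _) hxlA)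
              (mul_le_mul le_rfl (pow_le_pow_left₀ hw0 hwle 2) (by positivity) hεP)
              (by positivity) ?_
            exact mul_nonneg hxlA (mul_nonneg (Real.rpow_nonneg hε0.le _) hrq)
        _ = C₁^2 * (ε ^ (2*b) * ε ^ (-P-2)) * ((x l) ^ (1 - 2*γ) * ‖x‖ ^ q) := by ring
        _ = C₁^2 * ε ^ ((m:ℝ)+δ) * ((x l) ^ (1 - 2*γ) * ‖x‖ ^ q) := by rw [hε2]
        _ ≤ (M * ε ^ ((m:ℝ)+δ)) * ((x l) ^ (1 - 2*γ) * ‖x‖ ^ q) := by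
            refine mul_le_mul_of_nonneg_right
              (mul_le_mul_of_nonneg_right (le_max_right _ _) hεmδ)
              (mul_nonneg hxlA hrq)
    · -- outer region
      have h1 : 1 ≤ ε⁻¹ * ‖x‖ := by
        have h2 : ε⁻¹ * ε ≤ ε⁻¹ * ‖x‖ :=
          mul_le_mul_of_nonneg_left hcase (inv_pos.2 hε0).le
        rwa [inv_mul_cancel₀ hε0.ne'] at h2
      have hbase : 0 < ε⁻¹ * ‖x‖ := lt_of_lt_of_le one_pos h1
      have hw1 : w ≤ C * (ε⁻¹ * ‖x‖) ^ (-(P + 1)) := by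
        have := hdecay (ε⁻¹ • x) (by rw [hnsmul]; exact h1)
        rwa [hnsmul, hPdef] at this
      have hw2 : w ≤ C * (ε⁻¹ * ‖x‖) ^ (-b) := by
        refine hw1.trans (mul_le_mul_of_nonneg_left ?_ hC0)
        exact Real.rpow_le_rpow_of_exponent_le h1 (by linarith)
      have hwsq : w^2 ≤ C^2 * (ε ^ (2*b) * ‖x‖ ^ (-(2*b))) := by
        calc w^2 ≤ (C * (ε⁻¹ * ‖x‖) ^ (-b))^2 := pow_le_pow_left₀ hw0 hw2 2
          _ = C^2 * ((ε⁻¹ * ‖x‖) ^ (-b))^2 := by rw [mul_pow]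
          _ = C^2 * (ε⁻¹ * ‖x‖) ^ (-(2*b)) := by
              rw [← Real.rpow_natCast ((ε⁻¹ * ‖x‖) ^ (-b)) 2, ← Real.rpow_mul hbase.le]
              congr 2
              push_cast; ring
          _ = C^2 * (ε ^ (2*b) * ‖x‖ ^ (-(2*b))) := by
              rw [Real.mul_rpow (by positivity) hr0.le, Real.inv_rpow hε0.le,
                ← Real.rpow_neg hε0.le, neg_neg]
      calc (x l) ^ (1 - 2*γ) * ‖x‖ ^ ((m:ℝ) + 1) * (ε ^ (-P - 2) * w^2)
          ≤ (x l) ^ (1 - 2*γ) * ‖x‖ ^ ((m:ℝ) + 1) *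
              (ε ^ (-P - 2) * (C^2 * (ε ^ (2*b) * ‖x‖ ^ (-(2*b))))) := by
            refine mul_le_mul_of_nonneg_left
              (mul_le_mul_of_nonneg_left hwsq hεP)
              (mul_nonneg hxlA (Real.rpow_nonneg (norm_nonneg x) _))
        _ = C^2 * (ε ^ (2*b) * ε ^ (-P-2)) *
              ((x l) ^ (1 - 2*γ) * (‖x‖ ^ ((m:ℝ)+1) * ‖x‖ ^ (-(2*b)))) := by ring
        _ = C^2 * ε ^ ((m:ℝ)+δ) * ((x l) ^ (1 - 2*γ) * ‖x‖ ^ q) := by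
            rw [hε2, ← Real.rpow_add hr0, show (m:ℝ) + 1 + -(2*b) = q by rw [hqdef]; ring]
        _ ≤ (M * ε ^ ((m:ℝ)+δ)) * ((x l) ^ (1 - 2*γ) * ‖x‖ ^ q) := by
            refine mul_le_mul_of_nonneg_right
              (mul_le_mul_of_nonneg_right (le_max_left _ _) hεmδ)
              (mul_nonneg hxlA hrq)
  -- integral bound
  have keyInt : ∀ ε ∈ Ioo (0:ℝ) 1,
      (∫ x in S, (x l) ^ (1 - 2*γ) * ‖x‖ ^ ((m:ℝ) + 1) *
        (ε ^ (-(((n:ℝ) - 2*γ)/2) - 1) * ‖fderiv ℝ W (ε⁻¹ • x)‖)^2)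
      ≤ (M * I) * ε ^ ((m:ℝ) + δ) := by
    intro ε hε
    have step : (∫ x in S, (x l) ^ (1 - 2*γ) * ‖x‖ ^ ((m:ℝ) + 1) *
        (ε ^ (-(((n:ℝ) - 2*γ)/2) - 1) * ‖fderiv ℝ W (ε⁻¹ • x)‖)^2)
        ≤ ∫ x in S, (M * ε ^ ((m:ℝ) + δ)) * G x := by
      refine integral_mono_of_nonneg ?_ ((hGint.const_mul _)) ?_
      · rw [EventuallyLE, ae_restrict_iff' hSmeas]
        refine Eventually.of_forall fun x hx => ?_
        have : 0 < x l := hx.1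
        positivity
      · rw [EventuallyLE, ae_restrict_iff' hSmeas]
        exact Eventually.of_forall fun x hx => key ε hε x hx
    rw [integral_const_mul] at step
    calc _ ≤ M * ε ^ ((m:ℝ) + δ) * I := step
      _ = (M * I) * ε ^ ((m:ℝ) + δ) := by ring
  -- nonnegativity of the integral
  have hF0 : ∀ ε : ℝ, 0 ≤ ∫ x in S, (x l) ^ (1 - 2*γ) * ‖x‖ ^ ((m:ℝ) + 1) *
      (ε ^ (-(((n:ℝ) - 2*γ)/2) - 1) * ‖fderiv ℝ W (ε⁻¹ • x)‖)^2 := by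
    intro ε
    refine setIntegral_nonneg hSmeas fun x hx => ?_
    have : 0 < x l := hx.1
    positivity
  -- big-O then little-o
  have hbigO : (fun ε : ℝ =>
        ∫ x in S, (x l) ^ (1 - 2*γ) * ‖x‖ ^ ((m:ℝ) + 1) *
          (ε ^ (-(((n:ℝ) - 2*γ)/2) - 1) * ‖fderiv ℝ W (ε⁻¹ • x)‖)^2)
      =O[nhdsWithin 0 (Set.Ioi 0)] fun ε : ℝ => ε ^ ((m:ℝ) + δ) := by
    rw [isBigO_iff]
    refine ⟨M * I, ?_⟩
    filter_upwards [Ioo_mem_nhdsGT_of_mem ⟨le_refl (0:ℝ), one_pos⟩] with ε hε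
    rw [Real.norm_eq_abs, Real.norm_eq_abs, abs_of_nonneg (hF0 ε),
      abs_of_nonneg (Real.rpow_nonneg hε.1.le _)]
    exact keyInt ε hε
  have hlittle : (fun ε : ℝ => ε ^ ((m:ℝ) + δ)) =o[nhdsWithin 0 (Set.Ioi 0)]
      fun ε : ℝ => ε ^ m := by
    rw [isLittleO_iff]
    intro c hc
    have hd : (0:ℝ) < min 1 (c ^ (1/δ)) := lt_min one_pos (Real.rpow_pos_of_pos hc _)
    filter_upwards [Ioo_mem_nhdsGT_of_mem ⟨le_refl (0:ℝ), hd⟩] with ε hε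
    have hε0 : 0 < ε := hε.1
    have hεc : ε ^ δ ≤ c := by
      have h1 : ε ≤ c ^ (1/δ) := (hε.2.trans_le (min_le_right _ _)).le
      calc ε ^ δ ≤ (c ^ (1/δ)) ^ δ := Real.rpow_le_rpow hε0.le h1 hδ0.le
        _ = c := by
          rw [← Real.rpow_mul hc.le, one_div, inv_mul_cancel₀ (ne_of_gt hδ0), Real.rpow_one]
    rw [Real.norm_eq_abs, Real.norm_eq_abs, abs_of_nonneg (Real.rpow_nonneg hε0.le _),
      abs_of_nonneg (pow_nonneg hε0.le _), Real.rpow_add hε0, Real.rpow_natCast]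
    calc ε ^ m * ε ^ δ ≤ ε ^ m * c :=
          mul_le_mul_of_nonneg_left hεc (pow_nonneg hε0.le _)
      _ = c * ε ^ m := by ring
  exact hbigO.trans_isLittleO hlittle
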